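/- arXiv:2406.05666 — 4 statements merged into one kernel-verified Lean document; each statement's English description precedes it below -/
import Mathlib

section
/- Let G: ℝ^m → ℝ be differentiable and H(ψ)-convex, i.e., G(μ) − G(ν) − ⟨∇G(ν), μ−ν⟩ ≥ ψ(μ−ν) for all μ, ν, where ψ(z) = ‖az‖₂^r / r with a > 0, r > 1. Suppose G attains its minimum G* at μ*. Then for all μ: ψ(μ − μ*) ≤ G(μ) − G* ≤ ψ*(∇G(μ)), where ψ* is the Fenchel conjugate of ψ. -/
open RealInnerProductSpace

/-- For `G` that is H(ψ)-convex with `ψ(z) = ‖a•z‖^r/r`, minimized at `μ*`: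
`ψ(μ−μ*) ≤ G(μ) − G* ≤ ψ*(∇G(μ))` with `ψ*(w) = ‖w/a‖^{r/(r−1)}·(r−1)/r`
(generalized Polyak–Łojasiewicz inequality). -/
theorem h_convex_bounds (m : ℕ) (a r : ℝ) (ha : 0 < a) (hr : 1 < r)
    (G : EuclideanSpace ℝ (Fin m) → ℝ) (hG : Differentiable ℝ G)
    (hconvex : ∀ μ ν : EuclideanSpace ℝ (Fin m),
      ‖a • (μ - ν)‖ ^ r / r ≤ G μ - G ν - ⟪gradient G ν, μ - ν⟫)
    (μs : EuclideanSpace ℝ (Fin m)) (hmin : ∀ μ, G μs ≤ G μ)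
    (μ : EuclideanSpace ℝ (Fin m)) :
    ‖a • (μ - μs)‖ ^ r / r ≤ G μ - G μs ∧
    G μ - G μs ≤ ‖(1 / a) • gradient G μ‖ ^ (r / (r - 1)) * ((r - 1) / r) := by
  constructor
  · -- gradient at minimizer is zero
    have hloc : IsLocalMin G μs := Filter.Eventually.of_forall hmin
    have hf : fderiv ℝ G μs = 0 := hloc.fderiv_eq_zero
    have hgrad : gradient G μs = 0 := by
      simp [gradient, hf]
    have := hconvex μ μs
    rw [hgrad] at this
    simpa using this
  · set w := gradient G μ with hw
    have key := hconvex μs μ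
    -- G μ - G μs ≤ ⟪w, μ - μs⟫ - ψ(μ - μs)
    have h1 : G μ - G μs ≤ ⟪w, μ - μs⟫ - ‖a • (μs - μ)‖ ^ r / r := by
      have : ⟪w, μs - μ⟫ = -⟪w, μ - μs⟫ := by
        rw [← inner_neg_right, neg_sub]
      rw [this] at key
      linarith
    have hnorm : ‖a • (μs - μ)‖ = ‖a • (μ - μs)‖ := by
      have : a • (μs - μ) = -(a • (μ - μs)) := by
        rw [← smul_neg, neg_sub]
      rw [this, norm_neg]
    rw [hnorm] at h1
    set p := r / (r - 1) with hp
    have hpq : p.HolderConjugate r := (Real.HolderConjugate.conjExponent hr).symm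
    set s := ‖(1 / a) • w‖ with hs
    set t := ‖a • (μ - μs)‖ with ht
    have hst : ⟪w, μ - μs⟫ ≤ s * t := by
      have hcs : ⟪w, μ - μs⟫ ≤ ‖w‖ * ‖μ - μs‖ := real_inner_le_norm _ _
      have : s * t = ‖w‖ * ‖μ - μs‖ := by
        rw [hs, ht, norm_smul, norm_smul]
        simp [abs_of_pos ha, abs_of_pos (by positivity : (0:ℝ) < 1/a)]
        field_simp
      linarith [hcs, this.ge]
    have hyoung : s * t ≤ s ^ p / p + t ^ r / r :=
      Real.young_inequality_of_nonneg (norm_nonneg _) (norm_nonneg _) hpq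
    have hsp : s ^ p / p = s ^ p * ((r - 1) / r) := by
      rw [hp]
      rw [div_div_eq_mul_div]
      field_simp
    calc G μ - G μs ≤ ⟪w, μ - μs⟫ - t ^ r / r := h1
      _ ≤ s * t - t ^ r / r := by linarith
      _ ≤ s ^ p / p := by linarith
      _ = s ^ p * ((r - 1) / r) := hsp
end

section
/- Let X, Y be random variables on finite sets 𝒳, 𝒴 with joint distribution q, let Φ be a convex function on the probability simplex Δ over 𝒴, and let f: 𝒳 → ℝ^{|𝒴|}. Define the Fenchel–Young loss d_Φ(μ, ν) = Φ(μ) + Φ*(ν) − ⟨μ, ν⟩. Then E_{(X,Y)∼q}[d_Φ(1_Y, f(X))] = Ent_Φ(1_Y|X) + E_X[d_Φ(q_{𝒴|X}, f(X))], where Ent_Φ(1_Y|X) = E_X[E_{Y|X} Φ(1_Y) − Φ(q_{𝒴|X})] and q_{𝒴|x} is the conditional distribution of Y given X = x viewed as a vector in the simplex. -/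
/-- Decomposition of the expected Fenchel–Young risk into generalized
conditional entropy plus expected distribution fitting error. -/
theorem fenchel_young_risk_decomposition {X Y : Type*} [Fintype X] [Fintype Y]
    [DecidableEq Y]
    (q : X → Y → ℝ) (hq0 : ∀ x y, 0 ≤ q x y) (hq1 : ∑ x, ∑ y, q x y = 1)
    (Φ Φs : (Y → ℝ) → ℝ) (f : X → Y → ℝ)
    (dΦ : (Y → ℝ) → (Y → ℝ) → ℝ)
    (hd : ∀ μ ν, dΦ μ ν = Φ μ + Φs ν - ∑ y, μ y * ν y)
    (onehot : Y → Y → ℝ) (hone : ∀ y y', onehot y y' = if y' = y then 1 else 0)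
    (qX : X → ℝ) (hqX : ∀ x, qX x = ∑ y, q x y)
    (cond : X → Y → ℝ) (hcond : ∀ x y, cond x y = q x y / qX x) :
    ∑ x, ∑ y, q x y * dΦ (onehot y) (f x)
      = (∑ x, qX x * ((∑ y, cond x y * Φ (onehot y)) - Φ (cond x)))
        + ∑ x, qX x * dΦ (cond x) (f x) := by
  have key : ∀ x y, qX x * cond x y = q x y := by
    intro x y
    rw [hcond]
    rcases eq_or_ne (qX x) 0 with h | h
    · have hz : q x y = 0 := by
        have hs : ∑ y, q x y = 0 := (hqX x).symm.trans h
        exact (Finset.sum_eq_zero_iff_of_nonneg (fun y _ => hq0 x y)).mp hs y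
          (Finset.mem_univ y)
      simp [h, hz]
    · field_simp
  have h1 : ∀ x, qX x * ∑ y, cond x y * Φ (onehot y) = ∑ y, q x y * Φ (onehot y) := by
    intro x
    rw [Finset.mul_sum]
    exact Finset.sum_congr rfl fun y _ => by rw [← mul_assoc, key]
  have h2 : ∀ x, qX x * ∑ y, cond x y * f x y = ∑ y, q x y * f x y := by
    intro x
    rw [Finset.mul_sum]
    exact Finset.sum_congr rfl fun y _ => by rw [← mul_assoc, key]
  have hip : ∀ x y, ∑ y', onehot y y' * f x y' = f x y := by
    intro x y
    simp [hone]
  rw [← Finset.sum_add_distrib]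
  refine Finset.sum_congr rfl fun x _ => ?_
  have lhs : ∑ y, q x y * dΦ (onehot y) (f x)
      = (∑ y, q x y * Φ (onehot y)) + qX x * Φs (f x) - ∑ y, q x y * f x y := by
    rw [hqX, Finset.sum_mul]
    simp only [hd, hip, mul_add, mul_sub, Finset.sum_add_distrib, Finset.sum_sub_distrib]
  rw [lhs, hd, ← h1 x, ← h2 x]
  ring
end

section
/- Let Y be a random variable on a finite set 𝒴 with distribution q ∈ Δ, and let Φ: Δ → ℝ be convex and differentiable with conjugate Φ*. Then for any ν ∈ dom(Φ*), E_{Y∼q}[d_Φ(1_Y, ν)] = E_{Y∼q}[Φ(1_Y)] − Φ(q) + d_Φ(q, ν). Consequently, ν minimizes E_{Y∼q}[d_Φ(1_Y, ν)] over dom(Φ*) if and only if ∇Φ*(ν) = q (when Φ* is differentiable), i.e., the minimizer predicts the true distribution q. -/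
open RealInnerProductSpace

/-- Expectation-optimality of Fenchel–Young losses:
`E_{Y∼q}[d_Φ(1_Y, ν)] = E_{Y∼q}[Φ(1_Y)] − Φ(q) + d_Φ(q, ν)`, and `ν` minimizes the
expected loss iff `∇Φ*(ν) = q`. -/
theorem fenchel_young_expectation_optimality (d : ℕ)
    (q : EuclideanSpace ℝ (Fin d)) (hq0 : ∀ i, 0 ≤ q i) (hq1 : ∑ i, q i = 1)
    (Φ : EuclideanSpace ℝ (Fin d) → ℝ) (hdiff : Differentiable ℝ Φ)
    (hconv : ConvexOn ℝ {p : EuclideanSpace ℝ (Fin d) | (∀ i, 0 ≤ p i) ∧ ∑ i, p i = 1} Φ)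
    (Φs : EuclideanSpace ℝ (Fin d) → ℝ)
    (hΦs : ∀ ν, Φs ν =
      ⨆ p : {p : EuclideanSpace ℝ (Fin d) // (∀ i, 0 ≤ p i) ∧ ∑ i, p i = 1},
        ⟪p.1, ν⟫ - Φ p.1)
    (hΦsdiff : Differentiable ℝ Φs)
    (onehot : Fin d → EuclideanSpace ℝ (Fin d))
    (hone : ∀ y i, onehot y i = if i = y then 1 else 0)
    (dΦ : EuclideanSpace ℝ (Fin d) → EuclideanSpace ℝ (Fin d) → ℝ)
    (hd : ∀ μ ν, dΦ μ ν = Φ μ + Φs ν - ⟪μ, ν⟫)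
    (ν : EuclideanSpace ℝ (Fin d)) :
    (∑ y, q y * dΦ (onehot y) ν) = (∑ y, q y * Φ (onehot y)) - Φ q + dΦ q ν ∧
    ((∀ ν', (∑ y, q y * dΦ (onehot y) ν) ≤ ∑ y, q y * dΦ (onehot y) ν')
      ↔ gradient Φs ν = q) := by
  classical
  have hinner : ∀ a b : EuclideanSpace ℝ (Fin d), ⟪a, b⟫ = ∑ i, a i * b i := by
    intro a b
    simp [PiLp.inner_apply, RCLike.inner_apply, mul_comm]
  have honein : ∀ (y : Fin d) (b : EuclideanSpace ℝ (Fin d)), ⟪onehot y, b⟫ = b y := by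
    intro y b
    rw [hinner]
    rw [Finset.sum_eq_single y]
    · rw [hone]; simp
    · intro i _ hi; rw [hone]; simp [hi]
    · simp
  -- key identity
  set f : EuclideanSpace ℝ (Fin d) → ℝ := fun x => Φs x - ⟪q, x⟫ with hf
  have key : ∀ w, (∑ y, q y * dΦ (onehot y) w)
      = (∑ y, q y * Φ (onehot y)) + f w := by
    intro w
    have h1 : ∑ y, q y * ⟪onehot y, w⟫ = ⟪q, w⟫ := by
      rw [hinner]
      exact Finset.sum_congr rfl fun y _ => by rw [honein]
    have h2 : ∀ y, q y * dΦ (onehot y) w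
        = q y * Φ (onehot y) + q y * Φs w - q y * ⟪onehot y, w⟫ := by
      intro y; rw [hd]; ring
    simp only [h2]
    rw [Finset.sum_sub_distrib, Finset.sum_add_distrib, ← Finset.sum_mul, hq1, one_mul, h1, hf]
    ring
  -- part 1
  have part1 : (∑ y, q y * dΦ (onehot y) ν)
      = (∑ y, q y * Φ (onehot y)) - Φ q + dΦ q ν := by
    rw [key, hd, hf]; ring
  refine ⟨part1, ?_⟩
  -- setup for part 2
  set S : Set (EuclideanSpace ℝ (Fin d)) := {p | (∀ i, 0 ≤ p i) ∧ ∑ i, p i = 1} with hS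
  have hScl : IsClosed S := by
    have h1 : IsClosed {p : EuclideanSpace ℝ (Fin d) | ∀ i, 0 ≤ p i} := by
      rw [Set.setOf_forall]
      exact isClosed_iInter fun i =>
        isClosed_le continuous_const (EuclideanSpace.proj i).continuous
    have h2 : IsClosed {p : EuclideanSpace ℝ (Fin d) | ∑ i, p i = 1} :=
      isClosed_eq (continuous_finset_sum _ fun i _ => (EuclideanSpace.proj i).continuous)
        continuous_const
    exact h1.inter h2
  have hSb : Bornology.IsBounded S := by
    apply Bornology.IsBounded.subset (Metric.isBounded_closedBall (x := 0) (r := 1))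
    intro p hp
    simp only [Metric.mem_closedBall, dist_zero_right]
    have hple : ∀ i, p i ≤ 1 := by
      intro i
      calc p i ≤ ∑ j, p j := Finset.single_le_sum (fun j _ => hp.1 j) (Finset.mem_univ i)
        _ = 1 := hp.2
    rw [EuclideanSpace.norm_eq]
    rw [show (1 : ℝ) = Real.sqrt 1 by simp]
    apply Real.sqrt_le_sqrt
    calc ∑ i, ‖p i‖ ^ 2 = ∑ i, (p i) ^ 2 := by
          refine Finset.sum_congr rfl fun i _ => ?_
          rw [Real.norm_eq_abs, sq_abs]
      _ ≤ ∑ i, p i := by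
          refine Finset.sum_le_sum fun i _ => ?_
          nlinarith [hp.1 i, hple i]
      _ = 1 := hp.2
  have hScomp : IsCompact S := Metric.isCompact_of_isClosed_isBounded hScl hSb
  haveI hne : Nonempty {p : EuclideanSpace ℝ (Fin d) // (∀ i, 0 ≤ p i) ∧ ∑ i, p i = 1} :=
    ⟨⟨q, hq0, hq1⟩⟩
  have hbdd : ∀ w, BddAbove (Set.range
      fun p : {p : EuclideanSpace ℝ (Fin d) // (∀ i, 0 ≤ p i) ∧ ∑ i, p i = 1} =>
        ⟪p.1, w⟫ - Φ p.1) := by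
    intro w
    have hc : Continuous (fun p : EuclideanSpace ℝ (Fin d) => ⟪p, w⟫ - Φ p) :=
      (Continuous.inner continuous_id continuous_const).sub hdiff.continuous
    have himg := (hScomp.image hc).bddAbove
    rwa [Set.image_eq_range] at himg
  have hle : ∀ (w : EuclideanSpace ℝ (Fin d))
      (p : {p : EuclideanSpace ℝ (Fin d) // (∀ i, 0 ≤ p i) ∧ ∑ i, p i = 1}),
      ⟪p.1, w⟫ - Φ p.1 ≤ Φs w := by
    intro w p
    rw [hΦs]
    exact le_ciSup (hbdd w) p
  -- convexity of f on univ
  have hfconv : ConvexOn ℝ Set.univ f := by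
    refine ⟨convex_univ, ?_⟩
    intro x _ y _ a b ha hb hab
    have h1 : Φs (a • x + b • y) ≤ a * Φs x + b * Φs y := by
      rw [hΦs]
      refine ciSup_le fun p => ?_
      have hx := hle x p
      have hy := hle y p
      have hexp : ⟪p.1, a • x + b • y⟫ - Φ p.1
          = a * (⟪p.1, x⟫ - Φ p.1) + b * (⟪p.1, y⟫ - Φ p.1) := by
        rw [inner_add_right, real_inner_smul_right, real_inner_smul_right]
        linear_combination Φ p.1 * hab
      rw [hexp]
      exact add_le_add (mul_le_mul_of_nonneg_left hx ha) (mul_le_mul_of_nonneg_left hy hb)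
    have h2 : ⟪q, a • x + b • y⟫ = a * ⟪q, x⟫ + b * ⟪q, y⟫ := by
      rw [inner_add_right, real_inner_smul_right, real_inner_smul_right]
    simp only [hf, smul_eq_mul, h2]
    nlinarith [h1]
  -- differentiability of f
  have hinnerdiff : Differentiable ℝ (fun x : EuclideanSpace ℝ (Fin d) => ⟪q, x⟫) :=
    (innerSL ℝ q).differentiable
  have hfd : Differentiable ℝ f := hΦsdiff.sub hinnerdiff
  -- fderiv of f
  have hdf : ∀ w, fderiv ℝ f w = fderiv ℝ Φs w - innerSL ℝ q := by
    intro w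
    rw [hf]
    rw [fderiv_fun_sub (hΦsdiff w) (hinnerdiff w)]
    congr 1
    exact (innerSL ℝ q).fderiv
  -- gradient characterization
  have htd : InnerProductSpace.toDual ℝ (EuclideanSpace ℝ (Fin d)) q = innerSL ℝ q := by
    ext y
    simp [InnerProductSpace.toDual_apply_apply]
  have hgrad : gradient Φs ν = q ↔ fderiv ℝ Φs ν = innerSL ℝ q := by
    unfold gradient
    constructor
    · intro h
      have h2 := congrArg (InnerProductSpace.toDual ℝ (EuclideanSpace ℝ (Fin d))) h
      rwa [LinearIsometryEquiv.apply_symm_apply, htd] at h2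
    · intro h
      rw [h, ← htd, LinearIsometryEquiv.symm_apply_apply]
  -- reduce the minimization condition to f
  have hred : (∀ ν', (∑ y, q y * dΦ (onehot y) ν) ≤ ∑ y, q y * dΦ (onehot y) ν')
      ↔ ∀ ν', f ν ≤ f ν' := by
    constructor
    · intro h ν'
      have := h ν'
      rw [key, key] at this
      linarith
    · intro h ν'
      rw [key, key]
      linarith [h ν']
  rw [hred, hgrad]
  constructor
  · -- global min ⇒ stationarity
    intro h
    have hloc : IsLocalMin f ν := Filter.Eventually.of_forall h
    have h0 : fderiv ℝ f ν = 0 := hloc.fderiv_eq_zero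
    rw [hdf] at h0
    rwa [sub_eq_zero] at h0
  · -- stationarity ⇒ global min
    intro h ν'
    have h0 : fderiv ℝ f ν = 0 := by rw [hdf, h, sub_self]
    have hfν : HasFDerivAt f (0 : EuclideanSpace ℝ (Fin d) →L[ℝ] ℝ) ν := by
      have := (hfd ν).hasFDerivAt
      rwa [h0] at this
    set g : ℝ → ℝ := fun t => f (ν + t • (ν' - ν)) with hg
    have hgconv : ConvexOn ℝ Set.univ g := by
      have hA := hfconv.comp_affineMap (AffineMap.lineMap ν ν' : ℝ →ᵃ[ℝ] EuclideanSpace ℝ (Fin d))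
      have heq : (f ∘ (AffineMap.lineMap ν ν' : ℝ →ᵃ[ℝ] EuclideanSpace ℝ (Fin d))) = g := by
        funext t
        have harg : (AffineMap.lineMap ν ν' : ℝ →ᵃ[ℝ] EuclideanSpace ℝ (Fin d)) t
            = ν + t • (ν' - ν) := by
          simp only [AffineMap.lineMap_apply, vadd_eq_add, vsub_eq_sub]
          module
        rw [Function.comp_apply, harg]
      have hpre : ((AffineMap.lineMap ν ν' : ℝ →ᵃ[ℝ] EuclideanSpace ℝ (Fin d)) ⁻¹' Set.univ)
          = Set.univ := by simp
      rwa [heq, hpre] at hA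
    have hc : HasDerivAt (fun t : ℝ => ν + t • (ν' - ν)) (ν' - ν) 0 := by
      simpa using ((hasDerivAt_id (0 : ℝ)).smul_const (ν' - ν)).const_add ν
    have hgd : HasDerivAt g 0 0 := by
      have hfν' : HasFDerivAt f (0 : EuclideanSpace ℝ (Fin d) →L[ℝ] ℝ)
          (ν + (0 : ℝ) • (ν' - ν)) := by simpa using hfν
      have := hfν'.comp_hasDerivAt 0 hc
      rw [ContinuousLinearMap.zero_apply] at this
      exact this
    have hslope := hgconv.le_slope_of_hasDerivAt (Set.mem_univ 0) (Set.mem_univ 1)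
      zero_lt_one hgd
    have hg0 : g 0 = f ν := by simp [hg]
    have hg1 : g 1 = f ν' := by simp [hg]
    rw [slope_def_field] at hslope
    have : (0 : ℝ) ≤ g 1 - g 0 := by
      have h10 : (1 : ℝ) - 0 ≠ 0 := by norm_num
      field_simp at hslope
      linarith [hslope]
    rw [hg0, hg1] at this
    linarith
end

section
/- Let X, Y be random variables on finite sets with joint distribution q, and let f: 𝒳 → ℝ^{|𝒴|} be any function. With Φ strictly convex and differentiable on the simplex, min over constant predictions gives: min_{ν} E_X[d_Φ(q_{𝒴|X}, ν)] ≤ E_X[Φ(q_{𝒴|X})] − Φ(q_𝒴) = Ent_Φ(q_{𝒴|X}), where q_𝒴 = E_X[q_{𝒴|X}] is the marginal of Y and the minimizing constant is ν = ∇Φ(q_𝒴). Consequently, Ent_Φ(1_Y|X) ≤ min_f E_{(X,Y)∼q}[d_Φ(1_Y, f(X))] ≤ Ent_Φ(1_Y|X) + Ent_Φ(q_{𝒴|X}). -/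
open RealInnerProductSpace

/-- Gradient inequality for convex functions on a convex set. -/
private lemma grad_ineq {E : Type*} [NormedAddCommGroup E] [InnerProductSpace ℝ E]
    [CompleteSpace E] {S : Set E} {Φ : E → ℝ} (hconv : ConvexOn ℝ S Φ)
    (hdiff : Differentiable ℝ Φ) {x y : E} (hx : x ∈ S) (hy : y ∈ S) :
    Φ x + ⟪gradient Φ x, y - x⟫ ≤ Φ y := by
  -- consider g t = Φ (x + t • (y - x)) on [0,1]
  set g : ℝ → ℝ := fun t => Φ (x + t • (y - x)) with hg
  have hcurve : ∀ t : ℝ, HasDerivAt (fun t : ℝ => x + t • (y - x)) (y - x) t := by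
    intro t
    simpa using ((hasDerivAt_id t).smul_const (y - x)).const_add x
  have hgrad : HasFDerivAt Φ ((InnerProductSpace.toDual ℝ E) (gradient Φ x)) x :=
    (hdiff x).hasGradientAt.hasFDerivAt
  have hder : HasDerivAt g ⟪gradient Φ x, y - x⟫ 0 := by
    have h0 : (fun t : ℝ => x + t • (y - x)) 0 = x := by simp
    have := (h0 ▸ hgrad).comp_hasDerivAt 0 (hcurve 0)
    simp only [InnerProductSpace.toDual_apply_apply, zero_smul, add_zero] at this; exact this
  have hmem : ∀ t : ℝ, t ∈ Set.Icc (0:ℝ) 1 → x + t • (y - x) ∈ S := by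
    intro t ht
    have h1 := hconv.1 hx hy (by linarith [ht.1, ht.2] : (0:ℝ) ≤ 1 - t) ht.1 (by ring)
    have h2 : x + t • (y - x) = (1 - t) • x + t • y := by module
    rwa [h2]
  have hgconv : ConvexOn ℝ (Set.Icc (0:ℝ) 1) g := by
    refine ⟨convex_Icc 0 1, ?_⟩
    intro a ha b hb s t hs ht hst
    have hs1 : s = 1 - t := by linarith
    have h1 : x + (s • a + t • b) • (y - x)
        = s • (x + a • (y - x)) + t • (x + b • (y - x)) := by
      rw [hs1]; simp only [smul_eq_mul]; module
    calc g (s • a + t • b) = Φ (x + (s • a + t • b) • (y - x)) := rfl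
      _ = Φ (s • (x + a • (y - x)) + t • (x + b • (y - x))) := by rw [h1]
      _ ≤ s * Φ (x + a • (y - x)) + t * Φ (x + b • (y - x)) :=
          hconv.2 (hmem a ha) (hmem b hb) hs ht hst
      _ = s * g a + t * g b := rfl
  have hslope := hgconv.le_slope_of_hasDerivAt (Set.mem_Icc.mpr ⟨le_rfl, zero_le_one⟩)
    (Set.mem_Icc.mpr ⟨zero_le_one, le_rfl⟩) zero_lt_one hder
  have hslope1 : slope g 0 1 = Φ y - Φ x := by
    simp [slope_def_field, hg]
  rw [hslope1] at hslope
  linarith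

/-- Bounds on the minimal Fenchel–Young risk: the constant prediction
`∇Φ(q_𝒴)` witnesses `min_ν E_X[d_Φ(q_{𝒴|X}, ν)] ≤ Ent_Φ(q_{𝒴|X})`, and consequently
`Ent_Φ(1_Y|X) ≤ min_f E[d_Φ(1_Y, f(X))] ≤ Ent_Φ(1_Y|X) + Ent_Φ(q_{𝒴|X})`. -/
theorem fenchel_young_risk_bounds {X : Type*} [Fintype X] (d : ℕ)
    (q : X → Fin d → ℝ) (hq0 : ∀ x y, 0 ≤ q x y) (hq1 : ∑ x, ∑ y, q x y = 1)
    (Φ : EuclideanSpace ℝ (Fin d) → ℝ) (hdiff : Differentiable ℝ Φ)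
    (S : Set (EuclideanSpace ℝ (Fin d)))
    (hS : S = {p : EuclideanSpace ℝ (Fin d) | (∀ i, 0 ≤ p i) ∧ ∑ i, p i = 1})
    (hconv : StrictConvexOn ℝ S Φ)
    (Φs : EuclideanSpace ℝ (Fin d) → ℝ)
    (hΦs : ∀ ν, Φs ν = ⨆ p : S, ⟪(p : EuclideanSpace ℝ (Fin d)), ν⟫ - Φ p)
    (dΦ : EuclideanSpace ℝ (Fin d) → EuclideanSpace ℝ (Fin d) → ℝ)
    (hd : ∀ μ ν, dΦ μ ν = Φ μ + Φs ν - ⟪μ, ν⟫)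
    (onehot : Fin d → EuclideanSpace ℝ (Fin d))
    (hone : ∀ y i, onehot y i = if i = y then 1 else 0)
    (qX : X → ℝ) (hqX : ∀ x, qX x = ∑ y, q x y)
    (cond : X → EuclideanSpace ℝ (Fin d)) (hcond : ∀ x y, cond x y = q x y / qX x)
    (qY : EuclideanSpace ℝ (Fin d)) (hqY : ∀ y, qY y = ∑ x, q x y)
    (EntCond Ent1 : ℝ)
    (hEntCond : EntCond = (∑ x, qX x * Φ (cond x)) - Φ qY)
    (hEnt1 : Ent1 = ∑ x, qX x * ((∑ y, cond x y * Φ (onehot y)) - Φ (cond x)))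
    (risk : (X → EuclideanSpace ℝ (Fin d)) → ℝ)
    (hrisk : ∀ f, risk f = ∑ x, ∑ y, q x y * dΦ (onehot y) (f x)) :
    (∑ x, qX x * dΦ (cond x) (gradient Φ qY)) ≤ EntCond ∧
    (∀ f : X → EuclideanSpace ℝ (Fin d), Ent1 ≤ risk f) ∧
    (∃ f : X → EuclideanSpace ℝ (Fin d), risk f ≤ Ent1 + EntCond) := by
  classical
  -- inner products are dot products
  have hinner : ∀ u v : (EuclideanSpace ℝ (Fin d)), ⟪u, v⟫ = ∑ i, u i * v i := by
    intro u v
    simp [PiLp.inner_apply, mul_comm]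
  -- basic probability facts
  have hqX0 : ∀ x, 0 ≤ qX x := by
    intro x; rw [hqX]; exact Finset.sum_nonneg fun y _ => hq0 x y
  have hsumqX : ∑ x, qX x = 1 := by
    simp only [hqX]; exact hq1
  have hqcond : ∀ x y, q x y = qX x * cond x y := by
    intro x y
    rcases eq_or_ne (qX x) 0 with h | h
    · have h0 : q x y = 0 := by
        have := (Finset.sum_eq_zero_iff_of_nonneg (fun y _ => hq0 x y)).mp
          (by rw [← hqX x, h])
        exact this y (Finset.mem_univ y)
      simp [h0, h]
    · rw [hcond]; field_simp
  have hcondsum : ∀ x, qX x ≠ 0 → ∑ y, cond x y = 1 := by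
    intro x h
    have : ∑ y, cond x y = (∑ y, q x y) / qX x := by
      rw [Finset.sum_div]; exact Finset.sum_congr rfl fun y _ => hcond x y
    rw [this, ← hqX x, div_self h]
  have hcondS : ∀ x, qX x ≠ 0 → cond x ∈ S := by
    intro x h
    rw [hS]
    refine ⟨fun y => ?_, hcondsum x h⟩
    rw [hcond]
    exact div_nonneg (hq0 x y) (hqX0 x)
  have hqYS : qY ∈ S := by
    rw [hS]
    constructor
    · intro y; rw [hqY]; exact Finset.sum_nonneg fun x _ => hq0 x y
    · calc ∑ y, qY y = ∑ y, ∑ x, q x y := by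
            exact Finset.sum_congr rfl fun y _ => hqY y
        _ = ∑ x, ∑ y, q x y := Finset.sum_comm
        _ = 1 := hq1
  -- S is compact
  have hSclosed : IsClosed S := by
    rw [hS]
    have : {p : (EuclideanSpace ℝ (Fin d)) | (∀ i, 0 ≤ p i) ∧ ∑ i, p i = 1}
        = (⋂ i, {p : (EuclideanSpace ℝ (Fin d)) | 0 ≤ p i}) ∩ {p : (EuclideanSpace ℝ (Fin d)) | ∑ i, p i = 1} := by
      ext p; simp [Set.mem_iInter]
    rw [this]
    refine IsClosed.inter (isClosed_iInter fun i => ?_) ?_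
    · exact isClosed_le continuous_const (EuclideanSpace.proj i).continuous
    · exact isClosed_eq (continuous_finset_sum Finset.univ fun i _ =>
        (EuclideanSpace.proj i).continuous) continuous_const
  have hSbdd : Bornology.IsBounded S := by
    rw [Metric.isBounded_iff_subset_closedBall 0]
    refine ⟨1, fun p hp => ?_⟩
    rw [hS] at hp
    obtain ⟨hp0, hp1⟩ := hp
    have hple : ∀ i, p i ≤ 1 := by
      intro i
      calc p i ≤ ∑ j, p j := Finset.single_le_sum (fun j _ => hp0 j) (Finset.mem_univ i)
        _ = 1 := hp1
    rw [Metric.mem_closedBall, dist_zero_right, EuclideanSpace.norm_eq]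
    rw [show (1:ℝ) = Real.sqrt 1 by simp]
    apply Real.sqrt_le_sqrt
    calc ∑ i, ‖p i‖ ^ 2 = ∑ i, p i * p i := by
          refine Finset.sum_congr rfl fun i _ => ?_
          rw [Real.norm_eq_abs, sq_abs]; ring
      _ ≤ ∑ i, p i := Finset.sum_le_sum fun i _ =>
          (mul_le_of_le_one_left (hp0 i) (hple i)).trans_eq (rfl)
      _ = 1 := hp1
  have hScompact : IsCompact S := Metric.isCompact_of_isClosed_isBounded hSclosed hSbdd
  have hSne : S.Nonempty := ⟨qY, hqYS⟩
  haveI : Nonempty S := hSne.to_subtype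
  -- the sup defining Φs is attained over a compact set, hence bounded
  have hbdd : ∀ ν : (EuclideanSpace ℝ (Fin d)), BddAbove (Set.range fun p : S => ⟪(p : (EuclideanSpace ℝ (Fin d))), ν⟫ - Φ p) := by
    intro ν
    have hcont : ContinuousOn (fun p : (EuclideanSpace ℝ (Fin d)) => ⟪p, ν⟫ - Φ p) S :=
      ((continuous_id.inner continuous_const).sub hdiff.continuous).continuousOn
    have := (hScompact.image_of_continuousOn hcont).bddAbove
    rwa [Set.image_eq_range] at this
  -- Fenchel–Young inequality
  have hFY : ∀ (p : (EuclideanSpace ℝ (Fin d))), p ∈ S → ∀ ν : (EuclideanSpace ℝ (Fin d)), ⟪p, ν⟫ - Φ p ≤ Φs ν := by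
    intro p hp ν
    rw [hΦs]
    exact le_ciSup (hbdd ν) ⟨p, hp⟩
  -- the key inequality: at ν = ∇Φ(qY), the conjugate's sup is attained at qY
  set g : (EuclideanSpace ℝ (Fin d)) := gradient Φ qY with hgdef
  have hkey : Φs g ≤ ⟪qY, g⟫ - Φ qY := by
    rw [hΦs]
    refine ciSup_le fun pp => ?_
    have hgi := grad_ineq hconv.convexOn hdiff hqYS pp.2
    rw [← hgdef] at hgi
    have h1 : ⟪g, (pp : EuclideanSpace ℝ (Fin d)) - qY⟫
        = ⟪(pp : EuclideanSpace ℝ (Fin d)), g⟫ - ⟪qY, g⟫ := by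
      rw [inner_sub_right, real_inner_comm g, real_inner_comm g]
    rw [h1] at hgi
    linarith
  -- sum identity: E_X[⟪cond, ν⟫] = ⟪qY, ν⟫
  have hsum_inner : ∀ ν : (EuclideanSpace ℝ (Fin d)), ∑ x, qX x * ⟪cond x, ν⟫ = ⟪qY, ν⟫ := by
    intro ν
    rw [hinner]
    calc ∑ x, qX x * ⟪cond x, ν⟫ = ∑ x, ∑ i, (qX x * cond x i) * ν i := by
          refine Finset.sum_congr rfl fun x _ => ?_
          rw [hinner, Finset.mul_sum]
          exact Finset.sum_congr rfl fun i _ => by ring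
      _ = ∑ i, ∑ x, (qX x * cond x i) * ν i := Finset.sum_comm
      _ = ∑ i, qY i * ν i := by
          refine Finset.sum_congr rfl fun i _ => ?_
          rw [← Finset.sum_mul, hqY]
          congr 1
          exact Finset.sum_congr rfl fun x _ => (hqcond x i).symm
  -- onehot inner product
  have honehot_inner : ∀ (y : Fin d) (v : (EuclideanSpace ℝ (Fin d))), ⟪onehot y, v⟫ = v y := by
    intro y v
    rw [hinner]
    rw [Finset.sum_eq_single y]
    · rw [hone]; simp
    · intro i _ hi
      rw [hone]; simp [hi]
    · intro h; exact absurd (Finset.mem_univ y) h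
  -- inner product of cond with a vector, in terms of q
  have hq_inner : ∀ (x : X) (v : (EuclideanSpace ℝ (Fin d))), ∑ y, q x y * v y = qX x * ⟪cond x, v⟫ := by
    intro x v
    rw [hinner, Finset.mul_sum]
    refine Finset.sum_congr rfl fun y _ => ?_
    rw [hqcond x y]; ring
  refine ⟨?_, ?_, ?_⟩
  · -- part 1
    have hexpand : ∑ x, qX x * dΦ (cond x) g
        = (∑ x, qX x * Φ (cond x)) + (∑ x, qX x) * Φs g - ∑ x, qX x * ⟪cond x, g⟫ := by
      rw [Finset.sum_mul, ← Finset.sum_add_distrib, ← Finset.sum_sub_distrib]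
      refine Finset.sum_congr rfl fun x _ => ?_
      rw [hd]; ring
    rw [hexpand, hsumqX, hsum_inner, hEntCond]
    linarith
  · -- part 2
    intro f
    rw [hEnt1, hrisk]
    refine Finset.sum_le_sum fun x _ => ?_
    have hx_expand : ∑ y, q x y * dΦ (onehot y) (f x)
        = (∑ y, q x y * Φ (onehot y)) + qX x * Φs (f x) - qX x * ⟪cond x, f x⟫ := by
      rw [← hq_inner x (f x), hqX, Finset.sum_mul, ← Finset.sum_add_distrib,
        ← Finset.sum_sub_distrib]
      refine Finset.sum_congr rfl fun y _ => ?_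
      rw [hd, honehot_inner]; ring
    rw [hx_expand]
    have hqB : ∑ y, q x y * Φ (onehot y) = qX x * ∑ y, cond x y * Φ (onehot y) := by
      rw [Finset.mul_sum]
      refine Finset.sum_congr rfl fun y _ => ?_
      rw [hqcond x y]; ring
    rw [hqB]
    rcases eq_or_ne (qX x) 0 with h | h
    · simp [h]
    · have hFYx := hFY (cond x) (hcondS x h) (f x)
      have hq : 0 ≤ qX x := hqX0 x
      nlinarith [hFYx]
  · -- part 3
    refine ⟨fun _ => g, ?_⟩
    rw [hrisk]
    have hexpand : ∑ x, ∑ y, q x y * dΦ (onehot y) g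
        = (∑ x, ∑ y, q x y * Φ (onehot y)) + (∑ x, qX x) * Φs g
          - ∑ x, qX x * ⟪cond x, g⟫ := by
      rw [Finset.sum_mul, ← Finset.sum_add_distrib, ← Finset.sum_sub_distrib]
      refine Finset.sum_congr rfl fun x _ => ?_
      rw [← hq_inner x g, hqX, Finset.sum_mul, ← Finset.sum_add_distrib,
        ← Finset.sum_sub_distrib]
      refine Finset.sum_congr rfl fun y _ => ?_
      rw [hd, honehot_inner]; ring
    rw [hexpand, hsumqX, hsum_inner]
    have hEnt1' : Ent1 = (∑ x, ∑ y, q x y * Φ (onehot y)) - ∑ x, qX x * Φ (cond x) := by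
      rw [hEnt1, ← Finset.sum_sub_distrib]
      refine Finset.sum_congr rfl fun x _ => ?_
      rw [mul_sub, Finset.mul_sum]
      congr 1
      refine Finset.sum_congr rfl fun y _ => ?_
      rw [hqcond x y]; ring
    rw [hEnt1', hEntCond]
    linarith
end
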